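/- There exists a constant d (depending only on the universal machine) such that for every n and every randomized protocol {Π_r}_{r ∈ S} computing f(x,y) = x ⊕ y (bitwise XOR) on {0,1}^n × {0,1}^n with probability at least 2/3, there is a seed r₀ ∈ S such that for more than half of all pairs (x,y) ∈ {0,1}^n × {0,1}^n, C(t_{r₀}(x,y) ∣ Π_{r₀}) ≥ 2n − d; consequently log₂(max_{r ∈ S} |𝓡_r|) ≥ 2n − d. -/

import Mathlib

/-- A machine maps a program and a condition string to at most one output string. -/
abbrev Machine := List Bool → List Bool →. List Bool

/-- Conditional Kolmogorov complexity relative to machine `U`. -/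
noncomputable def KC (U : Machine) (x u : List Bool) : ℕ :=
  sInf { k | ∃ p : List Bool, p.length = k ∧ x ∈ U p u }

/-- `U` is a universal machine. -/
def IsUniversal (U : Machine) : Prop :=
  Partrec₂ U ∧
    ∀ V : Machine, Partrec₂ V →
      ∃ c : ℕ, ∀ p u x, x ∈ V p u → ∃ q : List Bool, x ∈ U q u ∧ q.length ≤ p.length + c

/-- Self-delimiting encoding of a string. -/
def eBits (x : List Bool) : List Bool := (x.map fun b => [b, b]).flatten ++ [true, false]

/-- The fixed computable pairing of strings. -/
def ePair (x y : List Bool) : List Bool := eBits x ++ y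

/-- Encoding of a list of strings. -/
def eList (l : List (List Bool)) : List Bool := (l.map eBits).flatten

/-- Conditional mutual information `I(x : y ∣ u)`. -/
noncomputable def MI (U : Machine) (x y u : List Bool) : ℝ :=
  (KC U x u : ℝ) + KC U y u - KC U (ePair x y) u

/-- Conditional triple information `I(x : y : w ∣ u)`. -/
noncomputable def TI (U : Machine) (x y w u : List Bool) : ℝ :=
  (KC U x u : ℝ) + KC U y u + KC U w u - KC U (ePair x y) u - KC U (ePair x w) u
    - KC U (ePair y w) u + KC U (ePair x (ePair y w)) u

/-- A combinatorial rectangle, given by its list of rows and list of columns. -/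
structure Rect where
  rows : List (List Bool)
  cols : List (List Bool)
deriving DecidableEq

/-- Canonical encoding of a rectangle. -/
def encRect (R : Rect) : List Bool := ePair (eList R.rows) (eList R.cols)

/-- The list of all bit strings of length `n`. -/
def allBV : ℕ → List (List Bool)
  | 0 => [[]]
  | n + 1 => (allBV n).flatMap fun x => [false :: x, true :: x]

/-- A nondeterministic communication protocol over `{0,1}^{n₁} × {0,1}^{n₂}`:
a finite family of rectangles covering the domain together with a transcript
function selecting, for every cell of the domain, a rectangle containing it. -/
structure Protocol (n₁ n₂ : ℕ) where
  rects : List Rect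
  trans : List Bool → List Bool → Rect
  rows_len : ∀ R ∈ rects, ∀ s ∈ R.rows, s.length = n₁
  cols_len : ∀ R ∈ rects, ∀ s ∈ R.cols, s.length = n₂
  trans_mem : ∀ x y : List Bool, x.length = n₁ → y.length = n₂ → trans x y ∈ rects
  trans_row : ∀ x y : List Bool, x.length = n₁ → y.length = n₂ → x ∈ (trans x y).rows
  trans_col : ∀ x y : List Bool, x.length = n₁ → y.length = n₂ → y ∈ (trans x y).cols

/-- The thickness of a cell: the number of rectangles of the protocol containing it. -/
def cellThick {n₁ n₂ : ℕ} (P : Protocol n₁ n₂) (x y : List Bool) : ℕ :=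
  P.rects.countP fun R => decide (x ∈ R.rows ∧ y ∈ R.cols)

/-- The thickness of a rectangle: the maximal thickness of a cell of the rectangle. -/
def rectThick {n₁ n₂ : ℕ} (P : Protocol n₁ n₂) (R : Rect) : ℕ :=
  (R.rows.flatMap fun x => R.cols.map fun y => cellThick P x y).foldr max 0

/-- Canonical encoding of a protocol: the list of its rectangles followed by
the graph of the transcript function on the domain. -/
def encProt {n₁ n₂ : ℕ} (P : Protocol n₁ n₂) : List Bool :=
  ePair (eList (P.rects.map encRect))
    (eList ((allBV n₁).flatMap fun x => (allBV n₂).map fun y => encRect (P.trans x y)))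

/-- A protocol with error: a protocol together with output functions of Alice and Bob. -/
structure EProtocol (n₁ n₂ : ℕ) extends Protocol n₁ n₂ where
  gA : List Bool → Rect → List Bool
  gB : List Bool → Rect → List Bool

/-- Canonical encoding of a protocol with error. -/
def encEProt {n₁ n₂ : ℕ} (P : EProtocol n₁ n₂) : List Bool :=
  ePair (encProt P.toProtocol)
    (ePair (eList ((allBV n₁).flatMap fun x => P.rects.map fun R => P.gA x R))
           (eList ((allBV n₂).flatMap fun y => P.rects.map fun R => P.gB y R)))

/-- Bitwise XOR of two bit strings. -/
def xorStr (x y : List Bool) : List Bool := List.zipWith xor x y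

/-! ### Auxiliary lemmas -/

lemma mem_allBV (n : ℕ) (x : List Bool) : x ∈ allBV n ↔ x.length = n := by
  induction n generalizing x with
  | zero => simp [allBV, List.length_eq_zero_iff]
  | succ n ih =>
    simp only [allBV, List.mem_flatMap, List.mem_cons]
    constructor
    · rintro ⟨y, hy, h⟩
      rcases h with h | h | h <;> first | (subst h; simp [ih y |>.mp hy]) | simp_all
    · intro hx
      cases x with
      | nil => simp at hx
      | cons b x =>
        refine ⟨x, (ih x).mpr (by simpa using hx), ?_⟩
        cases b <;> simp

lemma nodup_allBV (n : ℕ) : (allBV n).Nodup := by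
  induction n with
  | zero => simp [allBV]
  | succ n ih =>
    rw [allBV, List.nodup_flatMap]
    refine ⟨fun x _ => by simp, ?_⟩
    refine ih.imp ?_
    intro a b hab
    simp only [Function.onFun, List.disjoint_left]
    intro z hz hz'
    simp only [List.mem_cons, List.not_mem_nil] at hz hz'
    rcases hz with rfl | rfl | h <;> rcases hz' with h' | h' | h' <;> simp_all

lemma length_allBV (n : ℕ) : (allBV n).length = 2 ^ n := by
  induction n with
  | zero => simp [allBV]
  | succ n ih =>
    rw [allBV, List.length_flatMap]
    rw [List.map_congr_left (g := fun _ => 2) (by intros; rfl), List.map_const', List.sum_replicate,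
      ih]
    simp [pow_succ, smul_eq_mul, mul_comm]

lemma eBits_cons (b : Bool) (x : List Bool) : eBits (b :: x) = b :: b :: eBits x := by
  simp [eBits]

lemma eBits_append_inj : ∀ x y u v : List Bool, eBits x ++ u = eBits y ++ v → x = y ∧ u = v := by
  intro x
  induction x with
  | nil =>
    intro y u v h
    cases y with
    | nil => simp [eBits] at h; simp [h]
    | cons c ys => exact absurd h (by cases c <;> simp [eBits])
  | cons b xs ih =>
    intro y u v h
    cases y with
    | nil => exact absurd h (by cases b <;> simp [eBits])
    | cons c ys =>
      rw [eBits_cons, eBits_cons] at h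
      simp only [List.cons_append, List.cons.injEq] at h
      obtain ⟨rfl, -, h⟩ := h
      obtain ⟨rfl, rfl⟩ := ih ys u v h
      exact ⟨rfl, rfl⟩

lemma eList_inj : ∀ l l' : List (List Bool), eList l = eList l' → l = l' := by
  intro l
  induction l with
  | nil =>
    intro l' h
    cases l' with
    | nil => rfl
    | cons a l' => exact absurd h.symm (by simp [eList, eBits])
  | cons a l ih =>
    intro l' h
    cases l' with
    | nil => exact absurd h (by simp [eList, eBits])
    | cons a' l' =>
      simp only [eList, List.map_cons, List.flatten_cons] at h
      obtain ⟨rfl, h2⟩ := eBits_append_inj a a' _ _ h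
      rw [ih l' h2]

lemma ePair_inj {x y x' y' : List Bool} (h : ePair x y = ePair x' y') : x = x' ∧ y = y' :=
  eBits_append_inj x x' y y' h

lemma encRect_inj : Function.Injective encRect := by
  intro R R' h
  obtain ⟨h1, h2⟩ := ePair_inj h
  cases R; cases R'
  simp only [Rect.mk.injEq]
  exact ⟨eList_inj _ _ h1, eList_inj _ _ h2⟩

lemma xorStr_cancel : ∀ x y y' : List Bool, x.length = y.length → x.length = y'.length →
    xorStr x y = xorStr x y' → y = y' := by
  intro x
  induction x with
  | nil => intro y y' h h' _; cases y <;> cases y' <;> simp_all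
  | cons b xs ih =>
    intro y y' h h' he
    cases y with | nil => simp at h | cons c ys =>
    cases y' with | nil => simp at h' | cons c' ys' =>
    simp only [xorStr, List.zipWith_cons_cons, List.cons.injEq] at he
    have : c = c' := by cases b <;> cases c <;> cases c' <;> simp_all
    exact this ▸ congrArg _ (ih ys ys' (by simpa using h) (by simpa using h') he.2)

lemma exists_prog {U : Machine} (hU : IsUniversal U) (x u : List Bool) : ∃ p, x ∈ U p u := by
  obtain ⟨c, hc⟩ := hU.2 (fun p _u => Part.some p) Computable.fst
  obtain ⟨q, hq, -⟩ := hc x u x (Part.mem_some x)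
  exact ⟨q, hq⟩

lemma KC_attained {U : Machine} (hU : IsUniversal U) (x u : List Bool) :
    ∃ p : List Bool, p.length = KC U x u ∧ x ∈ U p u := by
  have hne : { k | ∃ p : List Bool, p.length = k ∧ x ∈ U p u }.Nonempty := by
    obtain ⟨p, hp⟩ := exists_prog hU x u
    exact ⟨p.length, p, rfl, hp⟩
  exact Nat.sInf_mem hne

lemma sum_two_pow (K : ℕ) : ∑ k ∈ Finset.range K, 2 ^ k = 2 ^ K - 1 := by
  induction K with
  | zero => simp
  | succ K ih => rw [Finset.sum_range_succ, ih]; have := Nat.one_le_two_pow (n := K); omega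

lemma card_low {U : Machine} (hU : IsUniversal U) (u : List Bool) (F : Finset (List Bool))
    (K : ℕ) (hF : ∀ x ∈ F, KC U x u < K) : F.card ≤ 2 ^ K - 1 := by
  classical
  set f : List Bool → List Bool := fun x => Classical.choose (KC_attained hU x u) with hf
  have hfspec : ∀ x, (f x).length = KC U x u ∧ x ∈ U (f x) u :=
    fun x => Classical.choose_spec (KC_attained hU x u)
  have hinj : Set.InjOn f F := by
    intro x hx y hy hxy
    exact Part.mem_unique (hfspec x).2 (hxy ▸ (hfspec y).2)
  calc F.card ≤ ((Finset.range K).biUnion fun k => (allBV k).toFinset).card := by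
        apply Finset.card_le_card_of_injOn f _ hinj
        intro x hx
        simp only [Finset.mem_coe, Finset.mem_biUnion, Finset.mem_range, List.mem_toFinset]
        exact ⟨(f x).length, (hfspec x).1 ▸ hF x hx, (mem_allBV _ _).mpr rfl⟩
    _ ≤ ∑ k ∈ Finset.range K, ((allBV k).toFinset).card := Finset.card_biUnion_le
    _ = ∑ k ∈ Finset.range K, 2 ^ k := by
        refine Finset.sum_congr rfl fun k _ => ?_
        rw [List.toFinset_card_of_nodup (nodup_allBV k), length_allBV k]
    _ = 2 ^ K - 1 := sum_two_pow K


lemma xorStr_comm (x y : List Bool) : xorStr x y = xorStr y x :=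
  List.zipWith_comm_of_comm (f := xor) (by intros; exact Bool.xor_comm _ _)

lemma matching_bound {n : ℕ} (P : EProtocol n n) (G : Finset (List Bool × List Bool))
    (hlen : ∀ p ∈ G, p.1.length = n ∧ p.2.length = n)
    (hpred : ∀ p ∈ G, P.gA p.1 (P.trans p.1 p.2) = xorStr p.1 p.2 ∧
      P.gB p.2 (P.trans p.1 p.2) = xorStr p.1 p.2)
    (R : Rect) :
    (G.filter fun p => P.trans p.1 p.2 = R).card ^ 2
      ≤ R.rows.toFinset.card * R.cols.toFinset.card := by
  classical
  set M : Finset (List Bool × List Bool) := G.filter fun p => P.trans p.1 p.2 = R with hM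
  have hmem : ∀ p ∈ M, p ∈ G ∧ P.trans p.1 p.2 = R := by
    intro p hp; exact Finset.mem_filter.mp hp
  have hxoreq : ∀ p ∈ M, ∀ q ∈ M, p.1 = q.1 ∨ p.2 = q.2 → xorStr p.1 p.2 = xorStr q.1 q.2 := by
    intro p hp q hq h
    obtain ⟨hpG, hpR⟩ := hmem p hp
    obtain ⟨hqG, hqR⟩ := hmem q hq
    rcases h with h | h
    · rw [← (hpred p hpG).1, ← (hpred q hqG).1, hpR, hqR, h]
    · rw [← (hpred p hpG).2, ← (hpred q hqG).2, hpR, hqR, h]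
  have h1 : M.card ≤ R.rows.toFinset.card := by
    apply Finset.card_le_card_of_injOn Prod.fst
    · intro p hp
      obtain ⟨hpG, hpR⟩ := hmem p hp
      rw [Finset.mem_coe, List.mem_toFinset, ← hpR]
      exact P.trans_row p.1 p.2 (hlen p hpG).1 (hlen p hpG).2
    · intro p hp q hq hpq
      simp only [Finset.mem_coe] at hp hq
      have hxor := hxoreq p hp q hq (Or.inl hpq)
      have h2 : p.2 = q.2 := by
        refine xorStr_cancel p.1 p.2 q.2 ((hlen p (hmem p hp).1).1.trans
          (hlen p (hmem p hp).1).2.symm) ((hlen p (hmem p hp).1).1.trans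
          (hlen q (hmem q hq).1).2.symm) ?_
        rw [hxor, hpq]
      exact Prod.ext hpq h2
  have h2 : M.card ≤ R.cols.toFinset.card := by
    apply Finset.card_le_card_of_injOn Prod.snd
    · intro p hp
      obtain ⟨hpG, hpR⟩ := hmem p hp
      rw [Finset.mem_coe, List.mem_toFinset, ← hpR]
      exact P.trans_col p.1 p.2 (hlen p hpG).1 (hlen p hpG).2
    · intro p hp q hq hpq
      simp only [Finset.mem_coe] at hp hq
      have hxor := hxoreq p hp q hq (Or.inr hpq)
      have h1' : p.1 = q.1 := by
        refine xorStr_cancel p.2 p.1 q.1 ((hlen p (hmem p hp).1).2.trans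
          (hlen p (hmem p hp).1).1.symm) ((hlen p (hmem p hp).1).2.trans
          (hlen q (hmem q hq).1).1.symm) ?_
        rw [xorStr_comm p.2 p.1, xorStr_comm p.2 q.1, hxor, hpq]
      exact Prod.ext h1' hpq
  calc M.card ^ 2 = M.card * M.card := sq M.card
    _ ≤ R.rows.toFinset.card * R.cols.toFinset.card := Nat.mul_le_mul h1 h2

/-- For any randomized protocol (a distribution over thickness-1 protocols) computing
bitwise XOR with probability at least `2/3`, there is a seed `r₀` such that for more
than half of all input pairs `C(t_{r₀}(x,y) ∣ Π_{r₀}) ≥ 2n - d`; consequently the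
communication cost is at least `2n - d`. -/
theorem stmt12 (U : Machine) (hU : IsUniversal U) :
    ∃ d : ℝ, ∀ n m : ℕ, 0 < m → ∀ Pr : Fin m → EProtocol n n,
      (∀ r : Fin m, ((Pr r).rects).Pairwise fun R₁ R₂ =>
        ∀ x y : List Bool, ¬(x ∈ R₁.rows ∧ y ∈ R₁.cols ∧ x ∈ R₂.rows ∧ y ∈ R₂.cols)) →
      (∀ x y : List Bool, x.length = n → y.length = n →
        ((Finset.univ.filter fun r : Fin m =>
            (Pr r).gA x ((Pr r).trans x y) = xorStr x y ∧
            (Pr r).gB y ((Pr r).trans x y) = xorStr x y).card : ℝ) ≥ (2 / 3) * m) →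
      ∃ r₀ : Fin m,
        (2 * (Nat.card {p : List Bool × List Bool // p.1.length = n ∧ p.2.length = n ∧
            (KC U (encRect ((Pr r₀).trans p.1 p.2)) (encEProt (Pr r₀)) : ℝ) ≥ 2 * n - d} : ℝ)
          > 2 ^ (2 * n)) ∧
        Real.logb 2 ((Finset.univ.sup fun r : Fin m => (Pr r).rects.length : ℕ) : ℝ) ≥ 2 * n - d := by
  classical
  refine ⟨6, fun n m hm Pr hdisj hcorr => ?_⟩
  set D : Finset (List Bool × List Bool) := (allBV n).toFinset ×ˢ (allBV n).toFinset with hD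
  have hmemD : ∀ p : List Bool × List Bool, p ∈ D ↔ p.1.length = n ∧ p.2.length = n := by
    intro p
    simp [hD, Finset.mem_product, mem_allBV]
  have cardD : D.card = 2 ^ (2 * n) := by
    rw [hD, Finset.card_product, List.toFinset_card_of_nodup (nodup_allBV n), length_allBV,
      two_mul, pow_add]
  -- the predicate of success of seed r on pair p
  set pred : Fin m → List Bool × List Bool → Prop := fun r p =>
    (Pr r).gA p.1 ((Pr r).trans p.1 p.2) = xorStr p.1 p.2 ∧
    (Pr r).gB p.2 ((Pr r).trans p.1 p.2) = xorStr p.1 p.2 with hpred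
  set good : Fin m → Finset (List Bool × List Bool) := fun r => D.filter (pred r) with hgoodset
  -- choose a good seed r₀
  have step1 : ∃ r₀ : Fin m, ((good r₀).card : ℝ) ≥ (2 / 3) * 2 ^ (2 * n) := by
    by_contra hcon
    push_neg at hcon
    have hswap : ∑ r : Fin m, ((good r).card : ℝ) =
        ∑ p ∈ D, ((Finset.univ.filter fun r : Fin m => pred r p).card : ℝ) := by
      push_cast [hgoodset, Finset.card_filter]
      rw [Finset.sum_comm]
    have hlow : ∑ r : Fin m, ((good r).card : ℝ) < m * ((2 / 3) * 2 ^ (2 * n)) := by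
      have : (Finset.univ : Finset (Fin m)).Nonempty := ⟨⟨0, hm⟩, Finset.mem_univ _⟩
      calc ∑ r : Fin m, ((good r).card : ℝ) < ∑ _r : Fin m, (2 / 3) * 2 ^ (2 * n) :=
            Finset.sum_lt_sum_of_nonempty this fun r _ => hcon r
        _ = m * ((2 / 3) * 2 ^ (2 * n)) := by rw [Finset.sum_const, Finset.card_univ, Fintype.card_fin, nsmul_eq_mul]
    have hhigh : ∑ r : Fin m, ((good r).card : ℝ) ≥ m * ((2 / 3) * 2 ^ (2 * n)) := by
      rw [hswap]
      calc ∑ p ∈ D, ((Finset.univ.filter fun r : Fin m => pred r p).card : ℝ)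
          ≥ ∑ _p ∈ D, (2 / 3) * (m : ℝ) := by
            refine Finset.sum_le_sum fun p hp => ?_
            exact hcorr p.1 p.2 ((hmemD p).mp hp).1 ((hmemD p).mp hp).2
        _ = m * ((2 / 3) * 2 ^ (2 * n)) := by
            rw [Finset.sum_const, cardD]; push_cast; ring
    linarith
  obtain ⟨r₀, hr₀⟩ := step1
  set P : EProtocol n n := Pr r₀ with hP
  set u : List Bool := encEProt P with hu
  set tr : List Bool × List Bool → Rect := fun p => P.trans p.1 p.2 with htr
  set G : Finset (List Bool × List Bool) := good r₀ with hG
  have hGD : G ⊆ D := Finset.filter_subset _ _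
  have hGlen : ∀ p ∈ G, p.1.length = n ∧ p.2.length = n := fun p hp => (hmemD p).mp (hGD hp)
  set T : Finset Rect := G.image tr with hT
  set M : Rect → Finset (List Bool × List Bool) := fun R => G.filter fun p => tr p = R with hM
  have hfib : ∀ s : Finset (List Bool × List Bool), s ⊆ G →
      s.card = ∑ R ∈ s.image tr, (s.filter fun p => tr p = R).card := by
    intro s hs
    exact Finset.card_eq_sum_card_fiberwise fun p hp => Finset.mem_image_of_mem tr hp
  have hGpred : ∀ p ∈ G, P.gA p.1 (P.trans p.1 p.2) = xorStr p.1 p.2 ∧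
      P.gB p.2 (P.trans p.1 p.2) = xorStr p.1 p.2 := by
    intro p hp
    exact (Finset.mem_filter.mp hp).2
  have matching : ∀ R : Rect, ((M R).card) ^ 2 ≤ R.rows.toFinset.card * R.cols.toFinset.card :=
    fun R => matching_bound P G hGlen hGpred R
  -- cells and disjointness
  set cells : Rect → Finset (List Bool × List Bool) :=
    fun R => R.rows.toFinset ×ˢ R.cols.toFinset with hcells
  have hTrects : ∀ R ∈ T, R ∈ P.rects := by
    intro R hR
    obtain ⟨p, hpG, rfl⟩ := Finset.mem_image.mp hR
    exact P.trans_mem p.1 p.2 (hGlen p hpG).1 (hGlen p hpG).2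
  have hcellsD : ∀ R ∈ T, cells R ⊆ D := by
    intro R hR p hp
    obtain ⟨h1, h2⟩ := Finset.mem_product.mp hp
    rw [hmemD]
    exact ⟨P.rows_len R (hTrects R hR) _ (List.mem_toFinset.mp h1),
      P.cols_len R (hTrects R hR) _ (List.mem_toFinset.mp h2)⟩
  have hdisjcells : ∀ R₁ ∈ T, ∀ R₂ ∈ T, R₁ ≠ R₂ → Disjoint (cells R₁) (cells R₂) := by
    intro R₁ h1 R₂ h2 hne
    have hsym : Symmetric (fun R₁ R₂ : Rect => ∀ x y : List Bool,
        ¬(x ∈ R₁.rows ∧ y ∈ R₁.cols ∧ x ∈ R₂.rows ∧ y ∈ R₂.cols)) := by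
      intro a b h x y hc
      exact h x y ⟨hc.2.2.1, hc.2.2.2, hc.1, hc.2.1⟩
    haveI : Std.Symm (fun R₁ R₂ : Rect => ∀ x y : List Bool,
        ¬(x ∈ R₁.rows ∧ y ∈ R₁.cols ∧ x ∈ R₂.rows ∧ y ∈ R₂.cols)) := ⟨fun a b h => hsym h⟩
    have key := (hdisj r₀).forall (hTrects R₁ h1) (hTrects R₂ h2) hne
    rw [Finset.disjoint_left]
    intro p hp hp'
    obtain ⟨ha, hb⟩ := Finset.mem_product.mp hp
    obtain ⟨ha', hb'⟩ := Finset.mem_product.mp hp'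
    exact key p.1 p.2 ⟨List.mem_toFinset.mp ha, List.mem_toFinset.mp hb,
      List.mem_toFinset.mp ha', List.mem_toFinset.mp hb'⟩
  have hsumcells : ∀ T' ⊆ T, ∑ R ∈ T', (cells R).card ≤ 2 ^ (2 * n) := by
    intro T' hT'
    rw [← Finset.card_biUnion fun R h1 R' h2 hne =>
      hdisjcells R (hT' h1) R' (hT' h2) hne, ← cardD]
    apply Finset.card_le_card
    intro p hp
    obtain ⟨R, hR, hpR⟩ := Finset.mem_biUnion.mp hp
    exact hcellsD R (hT' hR) hpR
  have hMsq : ∀ R : Rect, ((M R).card) ^ 2 ≤ (cells R).card := by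
    intro R
    rw [hcells]
    simpa [Finset.card_product] using matching R
  -- Cauchy–Schwarz
  have CS : ∀ T' ⊆ T, (∑ R ∈ T', ((M R).card : ℝ)) ^ 2 ≤ (T'.card : ℝ) * 2 ^ (2 * n) := by
    intro T' hT'
    have h1 : (∑ R ∈ T', ((M R).card : ℝ)) ^ 2
        ≤ (T'.card : ℝ) * ∑ R ∈ T', ((M R).card : ℝ) ^ 2 := sq_sum_le_card_mul_sum_sq
    have h2 : ∑ R ∈ T', ((M R).card : ℝ) ^ 2 ≤ (2 : ℝ) ^ (2 * n) := by
      calc ∑ R ∈ T', ((M R).card : ℝ) ^ 2 ≤ ∑ R ∈ T', ((cells R).card : ℝ) := by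
            refine Finset.sum_le_sum fun R _ => ?_
            exact_mod_cast hMsq R
        _ ≤ (2 : ℝ) ^ (2 * n) := by exact_mod_cast hsumcells T' hT'
    exact h1.trans (mul_le_mul_of_nonneg_left h2 (Nat.cast_nonneg _))
  have hGsum : G.card = ∑ R ∈ T, (M R).card :=
    Finset.card_eq_sum_card_fiberwise fun p hp => Finset.mem_image_of_mem tr hp
  have hA : (0 : ℝ) < 2 ^ (2 * n) := by positivity
  have hGcard : ((G.card : ℝ)) ^ 2 ≤ (T.card : ℝ) * 2 ^ (2 * n) := by
    rw [hGsum]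
    push_cast
    exact CS T (Finset.Subset.refl T)
  -- the communication bound
  have hTsup : (T.card : ℝ) ≤ ((Finset.univ.sup fun r : Fin m => (Pr r).rects.length : ℕ) : ℝ) := by
    have t1 : T ⊆ P.rects.toFinset := fun R hR => List.mem_toFinset.mpr (hTrects R hR)
    have t2 : T.card ≤ P.rects.length :=
      (Finset.card_le_card t1).trans (List.toFinset_card_le _)
    have t3 : P.rects.length ≤ Finset.univ.sup fun r : Fin m => (Pr r).rects.length :=
      Finset.le_sup (f := fun r : Fin m => (Pr r).rects.length) (Finset.mem_univ r₀)
    exact_mod_cast t2.trans t3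
  have hsupR : (2 : ℝ) ^ (2 * n) / 4 ≤ ((Finset.univ.sup fun r : Fin m => (Pr r).rects.length : ℕ) : ℝ) := by
    have h1 : ((2 : ℝ) / 3 * 2 ^ (2 * n)) ^ 2 ≤ (T.card : ℝ) * 2 ^ (2 * n) :=
      (pow_le_pow_left₀ (by positivity) hr₀ 2).trans hGcard
    nlinarith [hTsup]
  have hlogb : Real.logb 2 ((Finset.univ.sup fun r : Fin m => (Pr r).rects.length : ℕ) : ℝ)
      ≥ 2 * (n : ℝ) - 6 := by
    have l1 : Real.logb 2 ((2 : ℝ) ^ (2 * n) / 4)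
        ≤ Real.logb 2 ((Finset.univ.sup fun r : Fin m => (Pr r).rects.length : ℕ) : ℝ) :=
      Real.logb_le_logb_of_le (by norm_num) (by positivity) hsupR
    have l2 : Real.logb 2 ((2 : ℝ) ^ (2 * n) / 4) = 2 * (n : ℝ) - 2 := by
      have h4 : (4 : ℝ) = 2 ^ (2 : ℕ) := by norm_num
      rw [Real.logb_div (by positivity) (by norm_num), h4, Real.logb_pow, Real.logb_pow,
        Real.logb_self_eq_one (by norm_num)]
      push_cast
      ring
    linarith
  -- the Kolmogorov counting part
  set lowR : Rect → Prop := fun R => (KC U (encRect R) u : ℝ) < 2 * (n : ℝ) - 6 with hlowR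
  set Tlow : Finset Rect := T.filter lowR with hTlow
  have hTlowT : Tlow ⊆ T := Finset.filter_subset _ _
  have hTlowcard : ((Tlow.card : ℝ)) ≤ 2 ^ (2 * n) / 64 := by
    rcases le_or_gt (2 * n) 6 with h6 | h6
    · have hempty : Tlow = ∅ := by
        rw [Finset.eq_empty_iff_forall_notMem]
        intro R hR
        have hlt : (KC U (encRect R) u : ℝ) < 2 * (n : ℝ) - 6 := (Finset.mem_filter.mp hR).2
        have hge : (0 : ℝ) ≤ (KC U (encRect R) u : ℝ) := Nat.cast_nonneg _
        have h2n : 2 * (n : ℝ) ≤ 6 := by exact_mod_cast h6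
        linarith
      rw [hempty]
      simp
      positivity
    · have hbound : (Tlow.image encRect).card ≤ 2 ^ (2 * n - 6) - 1 := by
        apply card_low hU u _ (2 * n - 6)
        intro x hx
        obtain ⟨R, hR, rfl⟩ := Finset.mem_image.mp hx
        have hlt : (KC U (encRect R) u : ℝ) < 2 * (n : ℝ) - 6 := (Finset.mem_filter.mp hR).2
        have hnat : KC U (encRect R) u + 6 < 2 * n := by
          have : (KC U (encRect R) u : ℝ) + 6 < 2 * (n : ℝ) := by linarith
          exact_mod_cast this
        omega
      have hinj : Tlow.card = (Tlow.image encRect).card :=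
        (Finset.card_image_of_injective _ encRect_inj).symm
      have hb2 : (Tlow.card : ℝ) ≤ ((2 : ℝ) ^ (2 * n - 6)) := by
        rw [hinj]
        exact_mod_cast hbound.trans (Nat.sub_le _ _)
      have hb3 : ((2 : ℝ) ^ (2 * n - 6)) = 2 ^ (2 * n) / 64 := by
        rw [pow_sub₀ (2 : ℝ) (by norm_num) (by omega), div_eq_mul_inv]
        norm_num
      linarith
  have hsumlow : (∑ R ∈ Tlow, ((M R).card : ℝ)) ≤ 2 ^ (2 * n) / 8 := by
    have h := CS Tlow hTlowT
    have hnn : (0 : ℝ) ≤ ∑ R ∈ Tlow, ((M R).card : ℝ) :=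
      Finset.sum_nonneg fun R _ => Nat.cast_nonneg _
    have hsq : (∑ R ∈ Tlow, ((M R).card : ℝ)) ^ 2 ≤ (2 ^ (2 * n) / 8) ^ 2 := by
      have := mul_le_mul_of_nonneg_right hTlowcard (le_of_lt hA)
      nlinarith
    exact (pow_le_pow_iff_left₀ hnn (by positivity) two_ne_zero).mp hsq
  set Glow : Finset (List Bool × List Bool) := G.filter (fun p => lowR (tr p)) with hGlow
  have hGlowG : Glow ⊆ G := Finset.filter_subset _ _
  have hGlowcard : ((Glow.card : ℝ)) ≤ 2 ^ (2 * n) / 8 := by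
    have hfib2 : Glow.card = ∑ R ∈ Glow.image tr, (Glow.filter fun p => tr p = R).card :=
      Finset.card_eq_sum_card_fiberwise fun p hp => Finset.mem_image_of_mem tr hp
    have himg : Glow.image tr ⊆ Tlow := by
      intro R hR
      obtain ⟨p, hp, rfl⟩ := Finset.mem_image.mp hR
      obtain ⟨hpG, hplow⟩ := Finset.mem_filter.mp hp
      exact Finset.mem_filter.mpr ⟨Finset.mem_image_of_mem tr hpG, hplow⟩
    have hle : ∀ R : Rect, (Glow.filter fun p => tr p = R).card ≤ (M R).card := by
      intro R
      apply Finset.card_le_card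
      intro p hp
      obtain ⟨hp1, hp2⟩ := Finset.mem_filter.mp hp
      exact Finset.mem_filter.mpr ⟨hGlowG hp1, hp2⟩
    calc (Glow.card : ℝ)
        = ∑ R ∈ Glow.image tr, ((Glow.filter fun p => tr p = R).card : ℝ) := by
          exact_mod_cast hfib2
      _ ≤ ∑ R ∈ Glow.image tr, ((M R).card : ℝ) :=
          Finset.sum_le_sum fun R _ => by exact_mod_cast hle R
      _ ≤ ∑ R ∈ Tlow, ((M R).card : ℝ) :=
          Finset.sum_le_sum_of_subset_of_nonneg himg fun _ _ _ => Nat.cast_nonneg _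
      _ ≤ 2 ^ (2 * n) / 8 := hsumlow
  set H : Finset (List Bool × List Bool) := D.filter (fun p => ¬ lowR (tr p)) with hH
  have hsubH : G \ Glow ⊆ H := by
    intro p hp
    obtain ⟨hpG, hnp⟩ := Finset.mem_sdiff.mp hp
    refine Finset.mem_filter.mpr ⟨hGD hpG, ?_⟩
    intro hl
    exact hnp (Finset.mem_filter.mpr ⟨hpG, hl⟩)
  have hHcard : (H.card : ℝ) ≥ (2 / 3) * 2 ^ (2 * n) - 2 ^ (2 * n) / 8 := by
    have h1 : (G \ Glow).card = G.card - Glow.card := Finset.card_sdiff_of_subset hGlowG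
    have h2 : Glow.card ≤ G.card := Finset.card_le_card hGlowG
    have h3 : (G \ Glow).card ≤ H.card := Finset.card_le_card hsubH
    have h4 : ((G \ Glow).card : ℝ) = (G.card : ℝ) - (Glow.card : ℝ) := by
      rw [h1, Nat.cast_sub h2]
    have h5 : ((G \ Glow).card : ℝ) ≤ (H.card : ℝ) := by exact_mod_cast h3
    linarith
  -- conclusion
  refine ⟨r₀, ?_, ?_⟩
  · have hNat : (Nat.card {p : List Bool × List Bool // p.1.length = n ∧ p.2.length = n ∧
        (KC U (encRect (P.trans p.1 p.2)) u : ℝ) ≥ 2 * (n : ℝ) - 6}) = H.card := by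
      rw [← Nat.card_eq_finsetCard H]
      apply Nat.card_congr
      apply Equiv.subtypeEquivRight
      intro p
      rw [hH, Finset.mem_filter, hmemD, hlowR]
      constructor
      · rintro ⟨h1, h2, h3⟩
        exact ⟨⟨h1, h2⟩, not_lt.mpr h3⟩
      · rintro ⟨⟨h1, h2⟩, h3⟩
        exact ⟨h1, h2, not_lt.mp h3⟩
    rw [hNat]
    push_cast
    linarith
  · exact hlogb
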